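/- Let (x_i, y_i), i = 1,…,N be points in ℝ^d × ℝ, and let R_1,…,R_N be i.i.d. random vectors in ℝ^d with mean 𝟙 and covariance λΣ. Then (1/N)∑_{i=1}^N E[(wᵀ(R_i ⊙ x_i) − y_i)²] = (1/N)∑_{i=1}^N (wᵀx_i − y_i)² + λ wᵀ(C ⊙ Σ)w, where C = (1/N)∑_{i=1}^N x_i x_iᵀ. -/

import Mathlib

open MeasureTheory Finset

private lemma key {Ω : Type*} [MeasurableSpace Ω] (μ : Measure Ω) [IsProbabilityMeasure μ]
    {d : ℕ} (R : Ω → Fin d → ℝ) (a : Fin d → ℝ) (y : ℝ) (l : ℝ)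
    (S : Matrix (Fin d) (Fin d) ℝ)
    (hmean : ∀ j, ∫ ω, R ω j ∂μ = 1)
    (hsec : ∀ j k, ∫ ω, R ω j * R ω k ∂μ = 1 + l * S j k)
    (hint : ∀ j k, Integrable (fun ω => R ω j * R ω k) μ) :
    ∫ ω, (∑ j, a j * R ω j - y) ^ 2 ∂μ
      = (∑ j, a j - y) ^ 2 + l * ∑ j, ∑ k, a j * a k * S j k := by
  have hRint : ∀ j, Integrable (fun ω => R ω j) μ := by
    intro j
    by_contra h
    have := hmean j
    rw [integral_undef h] at this
    norm_num at this
  have h1 : ∀ ω, (∑ j, a j * R ω j - y) ^ 2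
      = (∑ j, ∑ k, (a j * a k) * (R ω j * R ω k))
        - (2 * y) * ∑ j, a j * R ω j + y ^ 2 := by
    intro ω
    have hsq : (∑ j, a j * R ω j) ^ 2
        = ∑ j, ∑ k, (a j * a k) * (R ω j * R ω k) := by
      rw [sq, Finset.sum_mul_sum]
      exact Finset.sum_congr rfl fun j _ => Finset.sum_congr rfl fun k _ => by ring
    rw [sub_sq, hsq]; ring
  have hI1 : Integrable (fun ω => ∑ j, ∑ k, (a j * a k) * (R ω j * R ω k)) μ :=
    integrable_finset_sum _ fun j _ =>
      integrable_finset_sum _ fun k _ => (hint j k).const_mul _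
  have hI2 : Integrable (fun ω => (2 * y) * ∑ j, a j * R ω j) μ :=
    (integrable_finset_sum _ fun j _ => (hRint j).const_mul _).const_mul _
  calc ∫ ω, (∑ j, a j * R ω j - y) ^ 2 ∂μ
      = ∫ ω, ((∑ j, ∑ k, (a j * a k) * (R ω j * R ω k))
          - (2 * y) * ∑ j, a j * R ω j + y ^ 2) ∂μ := by
        exact integral_congr_ae (Filter.Eventually.of_forall h1)
    _ = (∑ j, ∑ k, (a j * a k) * (1 + l * S j k)) - (2 * y) * ∑ j, a j + y ^ 2 := by
        have hI12 : Integrable (fun ω => (∑ j, ∑ k, (a j * a k) * (R ω j * R ω k))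
            - (2 * y) * ∑ j, a j * R ω j) μ := hI1.sub hI2
        rw [integral_add hI12 (integrable_const _),
          integral_sub hI1 hI2, integral_finset_sum]
        · simp only [integral_const, measure_univ, probReal_univ, ENNReal.toReal_one, smul_eq_mul, one_mul]
          congr 1
          congr 1
          · exact Finset.sum_congr rfl fun j _ => by
              rw [integral_finset_sum]
              · exact Finset.sum_congr rfl fun k _ => by
                  rw [integral_const_mul, hsec j k]
              · exact fun k _ => (hint j k).const_mul _
          · rw [integral_const_mul, integral_finset_sum]
            · congr 1
              exact Finset.sum_congr rfl fun j _ => by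
                rw [integral_const_mul, hmean j, mul_one]
            · exact fun j _ => (hRint j).const_mul _
        · exact fun j _ => integrable_finset_sum _ fun k _ => (hint j k).const_mul _
    _ = (∑ j, a j - y) ^ 2 + l * ∑ j, ∑ k, a j * a k * S j k := by
        have : ∑ j, ∑ k, (a j * a k) * (1 + l * S j k)
            = (∑ j, a j) * (∑ k, a k) + l * ∑ j, ∑ k, a j * a k * S j k := by
          rw [Finset.sum_mul_sum, Finset.mul_sum]
          rw [← Finset.sum_add_distrib]
          refine Finset.sum_congr rfl fun j _ => ?_
          rw [Finset.mul_sum, ← Finset.sum_add_distrib]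
          exact Finset.sum_congr rfl fun k _ => by ring
        rw [this]; ring

/-- Noise injection in least squares as Hadamard-structured regularization:
`(1/N)∑ᵢ E[(wᵀ(Rᵢ ⊙ xᵢ) − yᵢ)²] = (1/N)∑ᵢ (wᵀxᵢ − yᵢ)² + λ wᵀ(C ⊙ Σ)w`
where `C = (1/N)∑ᵢ xᵢxᵢᵀ`. -/
theorem stmt1 {Ω : Type*} [MeasurableSpace Ω] (μ : Measure Ω) [IsProbabilityMeasure μ]
    (d N : ℕ) (hN : 0 < N)
    (x : Fin N → Fin d → ℝ) (y : Fin N → ℝ)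
    (R : Fin N → Ω → Fin d → ℝ) (l : ℝ) (S : Matrix (Fin d) (Fin d) ℝ)
    (hl : 0 ≤ l) (hS : S.PosSemidef)
    (hmean : ∀ i j, ∫ ω, R i ω j ∂μ = 1)
    (hcov : ∀ i j k, ∫ ω, (R i ω j - 1) * (R i ω k - 1) ∂μ = l * S j k)
    (hint : ∀ i j k, Integrable (fun ω => R i ω j * R i ω k) μ)
    (w : Fin d → ℝ)
    (C : Matrix (Fin d) (Fin d) ℝ)
    (hC : ∀ j k, C j k = (1 / (N : ℝ)) * ∑ i, x i j * x i k) :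
    (1 / (N : ℝ)) * ∑ i, ∫ ω, (∑ j, w j * (R i ω j * x i j) - y i) ^ 2 ∂μ
      = (1 / (N : ℝ)) * ∑ i, (∑ j, w j * x i j - y i) ^ 2
        + l * ∑ j, ∑ k, w j * (C j k * S j k) * w k := by
  have hRint : ∀ i j, Integrable (fun ω => R i ω j) μ := by
    intro i j
    by_contra h
    have := hmean i j
    rw [integral_undef h] at this
    norm_num at this
  -- second moments
  have hsec : ∀ i j k, ∫ ω, R i ω j * R i ω k ∂μ = 1 + l * S j k := by
    intro i j k
    have hexp : ∀ ω, (R i ω j - 1) * (R i ω k - 1)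
        = R i ω j * R i ω k - R i ω j - R i ω k + 1 := fun ω => by ring
    have hI0 : Integrable (fun ω => R i ω j * R i ω k - R i ω j) μ :=
      (hint i j k).sub (hRint i j)
    have hI : Integrable (fun ω => R i ω j * R i ω k - R i ω j - R i ω k) μ :=
      hI0.sub (hRint i k)
    have := hcov i j k
    rw [integral_congr_ae (Filter.Eventually.of_forall hexp),
      integral_add hI (integrable_const _),
      integral_sub hI0 (hRint i k),
      integral_sub (hint i j k) (hRint i j), hmean i j, hmean i k] at this
    simp only [integral_const, measure_univ, probReal_univ, ENNReal.toReal_one, smul_eq_mul, one_mul] at this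
    linarith
  have hkey : ∀ i, ∫ ω, (∑ j, w j * (R i ω j * x i j) - y i) ^ 2 ∂μ
      = (∑ j, w j * x i j - y i) ^ 2
        + l * ∑ j, ∑ k, (w j * x i j) * (w k * x i k) * S j k := by
    intro i
    have h := key μ (R i) (fun j => w j * x i j) (y i) l S
      (hmean i) (hsec i) (hint i)
    have heq : ∀ ω, (∑ j, w j * (R i ω j * x i j) - y i) ^ 2
        = (∑ j, (w j * x i j) * R i ω j - y i) ^ 2 := fun ω => by
      congr 1
      exact congrArg (· - y i) (Finset.sum_congr rfl fun j _ => by ring)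
    rw [integral_congr_ae (Filter.Eventually.of_forall heq), h]
  simp only [hkey]
  rw [Finset.sum_add_distrib, mul_add]
  congr 1
  simp only [hC]
  simp only [Finset.mul_sum, Finset.sum_mul]
  rw [Finset.sum_comm]
  refine Finset.sum_congr rfl fun j _ => ?_
  rw [Finset.sum_comm]
  refine Finset.sum_congr rfl fun k _ => Finset.sum_congr rfl fun i _ => by ring
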